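/- Let P be a Borel probability measure on ℝ with cumulative distribution function F, let ν be a Borel probability measure on ℝ with continuous cumulative distribution function F_ν, and let s̲, s̄ : ℝ → ℝ be continuous nondecreasing functions with s̲(y) ≤ s̄(y) for all y, with s̲(y) → −∞ as y → −∞ and s̄(y) → +∞ as y → +∞. Define the correspondence Γ(y) = [s̲(y), s̄(y)]. Then the structure (P, Γ, ν) is internally consistent if and only if F_ν(s̲(y)) ≤ F(y) ≤ F_ν(s̄(y)) for all y ∈ ℝ. -/

import Mathlib

open MeasureTheory Set Filter

open ProbabilityTheory
open scoped Topology ENNReal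

namespace Stmt10Aux

/-- Generalized inverse (quantile function). -/
noncomputable def Qf (H : ℝ → ℝ) (v : ℝ) : ℝ := sInf {y | v ≤ H y}

variable {H : ℝ → ℝ} {v : ℝ}

lemma one_div_succ_tendsto : Tendsto (fun n : ℕ => 1 / ((n : ℝ) + 1)) atTop (𝓝 0) :=
  tendsto_one_div_add_atTop_nhds_zero_nat

lemma Sne (h1 : Tendsto H atTop (𝓝 1)) (hv1 : v < 1) : {y | v ≤ H y}.Nonempty :=
  (h1.eventually (eventually_ge_nhds hv1)).exists

lemma Sbdd (hm : Monotone H) (h0 : Tendsto H atBot (𝓝 0)) (hv0 : 0 < v) :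
    BddBelow {y | v ≤ H y} := by
  obtain ⟨y₀, hy₀⟩ := (h0.eventually (eventually_lt_nhds hv0)).exists
  refine ⟨y₀, fun y hy => ?_⟩
  by_contra h
  push_neg at h
  exact absurd (hy.trans (hm h.le)) (not_le.mpr hy₀)

lemma lt_of_lt_Qf (hm : Monotone H) (h0 : Tendsto H atBot (𝓝 0)) (hv0 : 0 < v)
    {y : ℝ} (hy : y < Qf H v) : H y < v := by
  by_contra h
  push_neg at h
  exact absurd (csInf_le (Sbdd hm h0 hv0) h) (not_le.mpr hy)

lemma le_H_Qf (hm : Monotone H) (h0 : Tendsto H atBot (𝓝 0)) (h1 : Tendsto H atTop (𝓝 1))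
    (hrc : ContinuousWithinAt H (Ici (Qf H v)) (Qf H v))
    (hv0 : 0 < v) (hv1 : v < 1) : v ≤ H (Qf H v) := by
  have hne := Sne h1 hv1
  have hbdd := Sbdd hm h0 hv0
  have key : ∀ n : ℕ, v ≤ H (Qf H v + 1 / ((n : ℝ) + 1)) := by
    intro n
    have hlt : Qf H v < Qf H v + 1 / ((n : ℝ) + 1) :=
      lt_add_of_pos_right _ (by positivity)
    obtain ⟨y, hyS, hylt⟩ := (csInf_lt_iff hbdd hne).mp hlt
    exact hyS.trans (hm hylt.le)
  have harg : Tendsto (fun n : ℕ => Qf H v + 1 / ((n : ℝ) + 1)) atTop (𝓝[≥] (Qf H v)) := by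
    refine tendsto_nhdsWithin_of_tendsto_nhds_of_eventually_within _ ?_ ?_
    · simpa using tendsto_const_nhds.add one_div_succ_tendsto
    · exact Eventually.of_forall fun n => le_add_of_nonneg_right (by positivity : (0:ℝ) ≤ 1 / ((n : ℝ) + 1))
  exact ge_of_tendsto (hrc.tendsto.comp harg) (Eventually.of_forall key)

lemma Qf_le_iff (hm : Monotone H) (h0 : Tendsto H atBot (𝓝 0)) (h1 : Tendsto H atTop (𝓝 1))
    (hrc : ContinuousWithinAt H (Ici (Qf H v)) (Qf H v))
    (hv0 : 0 < v) (hv1 : v < 1) {y : ℝ} : Qf H v ≤ y ↔ v ≤ H y :=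
  ⟨fun h => (le_H_Qf hm h0 h1 hrc hv0 hv1).trans (hm h),
   fun h => csInf_le (Sbdd hm h0 hv0) h⟩

lemma Qf_monoOn (hm : Monotone H) (h0 : Tendsto H atBot (𝓝 0)) (h1 : Tendsto H atTop (𝓝 1)) :
    MonotoneOn (Qf H) (Ioo 0 1) := fun a ha b hb hab =>
  csInf_le_csInf (Sbdd hm h0 ha.1) (Sne h1 hb.2) fun y hy => hab.trans hy

/-- Inverse transform sampling: pushing forward uniform on (0,1) by the quantile of μ gives μ. -/
lemma map_Qf (μ : Measure ℝ) [IsProbabilityMeasure μ] :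
    (volume.restrict (Ioo (0:ℝ) 1)).map (Qf (cdf μ)) = μ := by
  have hm := monotone_cdf μ
  have h0 := tendsto_cdf_atBot μ
  have h1 := tendsto_cdf_atTop μ
  have hmeas : AEMeasurable (Qf (cdf μ)) (volume.restrict (Ioo (0:ℝ) 1)) :=
    aemeasurable_restrict_of_monotoneOn measurableSet_Ioo (Qf_monoOn hm h0 h1)
  haveI : IsFiniteMeasure ((volume.restrict (Ioo (0:ℝ) 1)).map (Qf (cdf μ))) := by
    constructor
    rw [Measure.map_apply_of_aemeasurable hmeas MeasurableSet.univ]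
    exact (measure_mono (subset_univ _)).trans_lt
      (by rw [Measure.restrict_apply_univ, Real.volume_Ioo]; simp)
  refine Measure.ext_of_Iic _ _ fun y => ?_
  rw [Measure.map_apply_of_aemeasurable hmeas measurableSet_Iic,
      Measure.restrict_apply' measurableSet_Ioo]
  have hset : Qf (cdf μ) ⁻¹' Iic y ∩ Ioo 0 1 = Iic (cdf μ y) ∩ Ioo 0 1 := by
    ext v
    simp only [mem_inter_iff, mem_preimage, mem_Iic, mem_Ioo]
    constructor
    · rintro ⟨h, hv⟩
      exact ⟨(Qf_le_iff hm h0 h1 ((cdf μ).right_continuous _) hv.1 hv.2).mp h, hv⟩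
    · rintro ⟨h, hv⟩
      exact ⟨(Qf_le_iff hm h0 h1 ((cdf μ).right_continuous _) hv.1 hv.2).mpr h, hv⟩
  rw [hset, ← ofReal_cdf μ y]
  have h01 : 0 ≤ cdf μ y := cdf_nonneg μ y
  rcases lt_or_eq_of_le (cdf_le_one μ y) with hlt | heq
  · have : Iic (cdf μ y) ∩ Ioo 0 1 = Ioc 0 (cdf μ y) := by
      ext v
      simp only [mem_inter_iff, mem_Iic, mem_Ioo, mem_Ioc]
      exact ⟨fun ⟨h, hv⟩ => ⟨hv.1, h⟩, fun ⟨h0', hc⟩ => ⟨hc, h0', hc.trans_lt hlt⟩⟩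
    rw [this, Real.volume_Ioc, sub_zero]
  · have : Iic (cdf μ y) ∩ Ioo 0 1 = Ioo 0 1 :=
      inter_eq_right.mpr fun v hv => le_of_lt (heq ▸ hv.2)
    rw [this, Real.volume_Ioo, ← heq]
    norm_num

/-- A measure with continuous cdf gives same mass to Iic and Iio. -/
lemma Iic_eq_Iio (ν : Measure ℝ) [IsProbabilityMeasure ν]
    (hc : Continuous fun u : ℝ => (ν (Iic u)).toReal) (a : ℝ) :
    ν (Iic a) = ν (Iio a) := by
  have harg : Tendsto (fun n : ℕ => a - 1 / ((n : ℝ) + 1)) atTop (𝓝 a) := by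
    simpa using tendsto_const_nhds.sub one_div_succ_tendsto
  have hmono : Monotone fun n : ℕ => Iic (a - 1 / ((n : ℝ) + 1)) := by
    intro n m hnm
    apply Iic_subset_Iic.mpr
    have h1 : ((n : ℝ) + 1) ≤ (m : ℝ) + 1 := by exact_mod_cast Nat.succ_le_succ hnm
    have h2 : 1 / ((m : ℝ) + 1) ≤ 1 / ((n : ℝ) + 1) :=
      one_div_le_one_div_of_le (by positivity) h1
    linarith
  have hU : ⋃ n : ℕ, Iic (a - 1 / ((n : ℝ) + 1)) = Iio a := by
    ext x
    simp only [mem_iUnion, mem_Iic, mem_Iio]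
    constructor
    · rintro ⟨n, hn⟩
      have : 0 < 1 / ((n : ℝ) + 1) := by positivity
      linarith
    · intro hx
      obtain ⟨n, hn⟩ := exists_nat_one_div_lt (sub_pos.mpr hx)
      exact ⟨n, by linarith⟩
  have ht := tendsto_measure_iUnion_atTop (μ := ν) hmono
  rw [hU] at ht
  have hcomp := (ENNReal.continuous_ofReal.tendsto _).comp ((hc.tendsto a).comp harg)
  have hre : ∀ x : ℝ, ENNReal.ofReal ((ν (Iic x)).toReal) = ν (Iic x) :=
    fun x => ENNReal.ofReal_toReal (measure_ne_top ν _)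
  simp only [Function.comp_def, hre] at hcomp
  exact tendsto_nhds_unique hcomp ht

end Stmt10Aux

/-- A structure (P, Γ, ν) is internally consistent if there exists a probability law π
for the pair (Y, U) with marginals P and ν such that π({(y,u) : u ∈ Γ(y)}) = 1. -/
def InternallyConsistent {Y U : Type*} [MeasurableSpace Y] [MeasurableSpace U]
    (P : MeasureTheory.Measure Y) (Γ : Y → Set U) (ν : MeasureTheory.Measure U) : Prop :=
  ∃ π : MeasureTheory.Measure (Y × U), MeasureTheory.IsProbabilityMeasure π ∧
    π.map Prod.fst = P ∧ π.map Prod.snd = ν ∧ π {p | p.2 ∈ Γ p.1} = 1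

/-- Pilot Example 2, skills versus job requirements: with P a Borel
probability measure on ℝ with cdf F, ν a Borel probability measure on ℝ with continuous
cdf F_ν, s̲ ≤ s̄ continuous nondecreasing with s̲(y) → −∞ at −∞ and s̄(y) → +∞ at +∞, and
Γ(y) = [s̲(y), s̄(y)], the structure (P, Γ, ν) is internally consistent if and only if
F_ν(s̲(y)) ≤ F(y) ≤ F_ν(s̄(y)) for all y. -/
theorem stmt_10 (P ν : Measure ℝ) [IsProbabilityMeasure P] [IsProbabilityMeasure ν]
    (hFν_cont : Continuous fun u : ℝ => (ν (Set.Iic u)).toReal)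
    (slo shi : ℝ → ℝ) (hlo_cont : Continuous slo) (hhi_cont : Continuous shi)
    (hlo_mono : Monotone slo) (hhi_mono : Monotone shi)
    (hle : ∀ y, slo y ≤ shi y)
    (hlo_bot : Tendsto slo atBot atBot)
    (hhi_top : Tendsto shi atTop atTop) :
    InternallyConsistent P (fun y => Set.Icc (slo y) (shi y)) ν ↔
      ∀ y : ℝ, (ν (Set.Iic (slo y))).toReal ≤ (P (Set.Iic y)).toReal ∧
        (P (Set.Iic y)).toReal ≤ (ν (Set.Iic (shi y))).toReal := by
  constructor
  · rintro ⟨π, hπ, hfst, hsnd, hgraph⟩ y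
    have hgraph' : π {p : ℝ × ℝ | p.2 ∈ Icc (slo p.1) (shi p.1)} = 1 := hgraph
    have hSgm : MeasurableSet {p : ℝ × ℝ | p.2 ∈ Icc (slo p.1) (shi p.1)} := by
      have h1 : IsClosed {p : ℝ × ℝ | slo p.1 ≤ p.2} :=
        isClosed_le (hlo_cont.comp continuous_fst) continuous_snd
      have h2 : IsClosed {p : ℝ × ℝ | p.2 ≤ shi p.1} :=
        isClosed_le continuous_snd (hhi_cont.comp continuous_fst)
      exact (h1.inter h2).measurableSet
    have hcompl : π {p : ℝ × ℝ | p.2 ∈ Icc (slo p.1) (shi p.1)}ᶜ = 0 := by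
      rw [measure_compl hSgm (measure_ne_top _ _), measure_univ, hgraph', tsub_self]
    have hP : ∀ s : Set ℝ, MeasurableSet s → π (Prod.fst ⁻¹' s) = P s := by
      intro s hs; rw [← hfst, Measure.map_apply measurable_fst hs]
    have hν : ∀ s : Set ℝ, MeasurableSet s → π (Prod.snd ⁻¹' s) = ν s := by
      intro s hs; rw [← hsnd, Measure.map_apply measurable_snd hs]
    have hup : P (Iic y) ≤ ν (Iic (shi y)) := by
      rw [← hP _ measurableSet_Iic, ← hν _ measurableSet_Iic]
      calc π (Prod.fst ⁻¹' Iic y)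
          ≤ π (Prod.snd ⁻¹' Iic (shi y) ∪ {p : ℝ × ℝ | p.2 ∈ Icc (slo p.1) (shi p.1)}ᶜ) := by
            apply measure_mono
            intro p hp
            by_cases hpg : p ∈ {p : ℝ × ℝ | p.2 ∈ Icc (slo p.1) (shi p.1)}
            · exact Or.inl (hpg.2.trans (hhi_mono hp))
            · exact Or.inr hpg
        _ ≤ π (Prod.snd ⁻¹' Iic (shi y))
            + π {p : ℝ × ℝ | p.2 ∈ Icc (slo p.1) (shi p.1)}ᶜ := measure_union_le _ _
        _ = π (Prod.snd ⁻¹' Iic (shi y)) := by rw [hcompl, add_zero]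
    have hlow : ν (Iic (slo y)) ≤ P (Iic y) := by
      rw [Stmt10Aux.Iic_eq_Iio ν hFν_cont (slo y), ← hP _ measurableSet_Iic,
          ← hν _ measurableSet_Iio]
      calc π (Prod.snd ⁻¹' Iio (slo y))
          ≤ π (Prod.fst ⁻¹' Iic y ∪ {p : ℝ × ℝ | p.2 ∈ Icc (slo p.1) (shi p.1)}ᶜ) := by
            apply measure_mono
            intro p hp
            by_cases hpg : p ∈ {p : ℝ × ℝ | p.2 ∈ Icc (slo p.1) (shi p.1)}
            · exact Or.inl (le_of_not_gt fun h =>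
                absurd (hpg.1.trans_lt hp) (not_lt.mpr (hlo_mono h.le)))
            · exact Or.inr hpg
        _ ≤ π (Prod.fst ⁻¹' Iic y)
            + π {p : ℝ × ℝ | p.2 ∈ Icc (slo p.1) (shi p.1)}ᶜ := measure_union_le _ _
        _ = π (Prod.fst ⁻¹' Iic y) := by rw [hcompl, add_zero]
    exact ⟨ENNReal.toReal_mono (measure_ne_top P _) hlow,
           ENNReal.toReal_mono (measure_ne_top ν _) hup⟩
  · intro hcond
    have hGconteq : (fun u : ℝ => (ν (Iic u)).toReal) = ⇑(cdf ν) :=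
      funext fun u => (cdf_eq_real ν u).symm
    have hGcont : Continuous ⇑(cdf ν) := by rw [← hGconteq]; exact hFν_cont
    have hcdf : ∀ y : ℝ, cdf ν (slo y) ≤ cdf P y ∧ cdf P y ≤ cdf ν (shi y) := by
      intro y
      rw [cdf_eq_real, cdf_eq_real, cdf_eq_real]
      exact hcond y
    have hFm := monotone_cdf P
    have hF0 := tendsto_cdf_atBot P
    have hF1 := tendsto_cdf_atTop P
    have hGm := monotone_cdf ν
    have hG0 := tendsto_cdf_atBot ν
    have hG1 := tendsto_cdf_atTop ν
    have hQpm : AEMeasurable (Stmt10Aux.Qf (cdf P)) (volume.restrict (Ioo (0:ℝ) 1)) :=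
      aemeasurable_restrict_of_monotoneOn measurableSet_Ioo (Stmt10Aux.Qf_monoOn hFm hF0 hF1)
    have hQνm : AEMeasurable (Stmt10Aux.Qf (cdf ν)) (volume.restrict (Ioo (0:ℝ) 1)) :=
      aemeasurable_restrict_of_monotoneOn measurableSet_Ioo (Stmt10Aux.Qf_monoOn hGm hG0 hG1)
    have hpairm : AEMeasurable (fun v => (Stmt10Aux.Qf (cdf P) v, Stmt10Aux.Qf (cdf ν) v))
        (volume.restrict (Ioo (0:ℝ) 1)) := hQpm.prodMk hQνm
    haveI hprob0 : IsProbabilityMeasure (volume.restrict (Ioo (0:ℝ) 1)) :=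
      ⟨by rw [Measure.restrict_apply_univ, Real.volume_Ioo]; norm_num⟩
    refine ⟨(volume.restrict (Ioo (0:ℝ) 1)).map
        (fun v => (Stmt10Aux.Qf (cdf P) v, Stmt10Aux.Qf (cdf ν) v)),
        Measure.isProbabilityMeasure_map hpairm, ?_, ?_, ?_⟩
    · rw [AEMeasurable.map_map_of_aemeasurable measurable_fst.aemeasurable hpairm]
      exact Stmt10Aux.map_Qf P
    · rw [AEMeasurable.map_map_of_aemeasurable measurable_snd.aemeasurable hpairm]
      exact Stmt10Aux.map_Qf ν
    · have hSm : MeasurableSet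
          {p : ℝ × ℝ | p.2 ∈ (fun y => Icc (slo y) (shi y)) p.1} := by
        have h1 : IsClosed {p : ℝ × ℝ | slo p.1 ≤ p.2} :=
          isClosed_le (hlo_cont.comp continuous_fst) continuous_snd
        have h2 : IsClosed {p : ℝ × ℝ | p.2 ≤ shi p.1} :=
          isClosed_le continuous_snd (hhi_cont.comp continuous_fst)
        exact (h1.inter h2).measurableSet
      rw [Measure.map_apply_of_aemeasurable hpairm hSm,
          Measure.restrict_apply' measurableSet_Ioo]
      have hsub : Ioo (0:ℝ) 1 ⊆ (fun v => (Stmt10Aux.Qf (cdf P) v, Stmt10Aux.Qf (cdf ν) v))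
          ⁻¹' {p : ℝ × ℝ | p.2 ∈ (fun y => Icc (slo y) (shi y)) p.1} := by
        rintro v ⟨hv0, hv1⟩
        have hub : Stmt10Aux.Qf (cdf ν) v ≤ shi (Stmt10Aux.Qf (cdf P) v) :=
          (Stmt10Aux.Qf_le_iff hGm hG0 hG1 hGcont.continuousWithinAt hv0 hv1).mpr
            ((Stmt10Aux.le_H_Qf hFm hF0 hF1 ((cdf P).right_continuous _) hv0 hv1).trans
              (hcdf (Stmt10Aux.Qf (cdf P) v)).2)
        have hlb : slo (Stmt10Aux.Qf (cdf P) v) ≤ Stmt10Aux.Qf (cdf ν) v := by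
          have key : ∀ n : ℕ,
              slo (Stmt10Aux.Qf (cdf P) v - 1 / ((n : ℝ) + 1)) ≤ Stmt10Aux.Qf (cdf ν) v := by
            intro n
            have hy' : Stmt10Aux.Qf (cdf P) v - 1 / ((n : ℝ) + 1) < Stmt10Aux.Qf (cdf P) v := by
              have : 0 < 1 / ((n : ℝ) + 1) := by positivity
              linarith
            have hFy' : cdf P (Stmt10Aux.Qf (cdf P) v - 1 / ((n : ℝ) + 1)) < v :=
              Stmt10Aux.lt_of_lt_Qf hFm hF0 hv0 hy'
            have hGs : cdf ν (slo (Stmt10Aux.Qf (cdf P) v - 1 / ((n : ℝ) + 1))) < v :=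
              lt_of_le_of_lt (hcdf _).1 hFy'
            refine le_csInf (Stmt10Aux.Sne hG1 hv1) fun u hu => ?_
            by_contra h
            push_neg at h
            exact absurd (hu.trans (hGm h.le)) (not_le.mpr hGs)
          have harg : Tendsto (fun n : ℕ => Stmt10Aux.Qf (cdf P) v - 1 / ((n : ℝ) + 1))
              atTop (𝓝 (Stmt10Aux.Qf (cdf P) v)) := by
            simpa using tendsto_const_nhds.sub Stmt10Aux.one_div_succ_tendsto
          exact le_of_tendsto ((hlo_cont.tendsto _).comp harg) (Eventually.of_forall key)
        exact ⟨hlb, hub⟩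
      rw [inter_eq_right.mpr hsub, Real.volume_Ioo]
      norm_num
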